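/- arXiv:math/0209174 — 2 statements merged into one kernel-verified Lean document; each statement's English description precedes it below -/
import Mathlib

section
/- Let R be a commutative Noetherian ring of prime characteristic p, let I be an ideal of R, let U be a multiplicative set in R, and let z ∈ R. Suppose that for every minimal prime P of R disjoint from U, the image of z/1 in (R/P)[U⁻¹] lies in the tight closure of the extended ideal I·(R/P)[U⁻¹]. Then z/1 lies in the tight closure of I·R[U⁻¹] in R[U⁻¹] — equivalently, if tight closure commutes with localization in each R/P, there exists u ∈ U with u·z ∈ (I·(R/P))* for every minimal prime P of R disjoint from U. -/
/-- The `q`-th Frobenius power `I^{[q]}` of an ideal `I`: the ideal generated by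
`q`-th powers of elements of `I`. -/
def Ideal.frobeniusPower {R : Type*} [CommRing R] (I : Ideal R) (q : ℕ) : Ideal R :=
  Ideal.span ((fun x => x ^ q) '' (I : Set R))

/-- `R°`: the set of elements of `R` not contained in any minimal prime of `R`. -/
def primeComplement (R : Type*) [CommRing R] : Set R :=
  { c | ∀ P ∈ minimalPrimes R, c ∉ P }

/-- The tight closure `I*` of an ideal `I` in a ring of characteristic `p`:
elements `z` such that `c * z ^ (p ^ e) ∈ I ^ [p ^ e]` for some `c ∈ R°`
and all sufficiently large `e`. -/
def tightClosure (p : ℕ) {R : Type*} [CommRing R] (I : Ideal R) : Set R :=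
  { z | ∃ c ∈ primeComplement R, ∃ N : ℕ, ∀ e : ℕ, N ≤ e →
      c * z ^ p ^ e ∈ I.frobeniusPower (p ^ e) }

/-- Tight closure commutes with localization in `R`: for every ideal `I` and
multiplicative set `U`, `I* · R[U⁻¹] = (I · R[U⁻¹])*`. -/
def TightClosureCommutesWithLocalization (p : ℕ) (R : Type*) [CommRing R] : Prop :=
  ∀ (I : Ideal R) (U : Submonoid R),
    (Ideal.map (algebraMap R (Localization U)) (Ideal.span (tightClosure p I)) :
        Set (Localization U))
      = tightClosure p (Ideal.map (algebraMap R (Localization U)) I)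

/-- A ring is F-regular if every ideal is tightly closed, both in the ring itself
and in all of its localizations. -/
def FRegular (p : ℕ) (S : Type*) [CommRing S] : Prop :=
  (∀ I : Ideal S, tightClosure p I = (I : Set S)) ∧
    ∀ (U : Submonoid S) (J : Ideal (Localization U)),
      tightClosure p J = (J : Set (Localization U))

section Aux

variable {p : ℕ} [Fact p.Prime]

lemma charP_of_ringHom {R S : Type*} [CommRing R] [CommRing S] [CharP R p] [Nontrivial S]
    (f : R →+* S) : CharP S p := by
  have h : ((p : ℕ) : S) = 0 := by
    rw [← map_natCast f, CharP.cast_eq_zero, map_zero]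
  rcases (Fact.out : p.Prime).eq_one_or_self_of_dvd _ (ringChar.dvd h) with h1 | h1
  · exact absurd h1 (CharP.ringChar_ne_one)
  · exact ringChar.of_eq h1

lemma isPrime_of_mem_minimalPrimes {R : Type*} [CommRing R] {P : Ideal R}
    (h : P ∈ minimalPrimes R) : P.IsPrime := h.1.1

lemma one_mem_primeComplement (R : Type*) [CommRing R] : (1 : R) ∈ primeComplement R :=
  fun P hP h1 => (isPrime_of_mem_minimalPrimes hP).ne_top (P.eq_top_of_isUnit_mem h1 isUnit_one)

lemma mul_mem_primeComplement {R : Type*} [CommRing R] {a b : R}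
    (ha : a ∈ primeComplement R) (hb : b ∈ primeComplement R) : a * b ∈ primeComplement R := by
  intro P hP hab
  rcases (isPrime_of_mem_minimalPrimes hP).mem_or_mem hab with h | h
  · exact ha P hP h
  · exact hb P hP h

lemma pow_mem_primeComplement {R : Type*} [CommRing R] {a : R} (n : ℕ)
    (ha : a ∈ primeComplement R) : a ^ n ∈ primeComplement R := by
  induction n with
  | zero => simpa using one_mem_primeComplement R
  | succ n ih => rw [pow_succ]; exact mul_mem_primeComplement ih ha

lemma pow_mem_frobeniusPower {R : Type*} [CommRing R] {I : Ideal R} {x : R} (hx : x ∈ I)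
    (q : ℕ) : x ^ q ∈ I.frobeniusPower q :=
  Ideal.subset_span ⟨x, hx, rfl⟩

lemma frobeniusPower_pow_mem {R : Type*} [CommRing R] [CharP R p] {I : Ideal R} {a : R}
    {e : ℕ} (e' : ℕ) (ha : a ∈ I.frobeniusPower (p ^ e)) :
    a ^ p ^ e' ∈ I.frobeniusPower (p ^ (e + e')) := by
  induction ha using Submodule.span_induction with
  | mem x h =>
    obtain ⟨y, hy, rfl⟩ := h
    rw [← pow_mul, ← pow_add]
    exact pow_mem_frobeniusPower hy _
  | zero =>
    rw [zero_pow (pow_ne_zero _ (Fact.out : p.Prime).ne_zero)]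
    exact Submodule.zero_mem _
  | add x y hx hy ihx ihy =>
    rw [add_pow_char_pow]
    exact Submodule.add_mem _ ihx ihy
  | smul r x hx ih =>
    rw [smul_eq_mul, mul_pow]
    exact Ideal.mul_mem_left _ _ ih

lemma frobeniusPower_map_le {R S : Type*} [CommRing R] [CommRing S] [CharP S p] (f : R →+* S)
    (I : Ideal R) (e : ℕ) :
    (I.map f).frobeniusPower (p ^ e) ≤ (I.frobeniusPower (p ^ e)).map f := by
  refine Ideal.span_le.2 ?_
  rintro _ ⟨y, hy, rfl⟩
  show y ^ p ^ e ∈ (I.frobeniusPower (p ^ e)).map f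
  have hy' : y ∈ Ideal.span (f '' (I : Set R)) := hy
  clear hy
  induction hy' using Submodule.span_induction with
  | mem x h =>
    obtain ⟨x, hx, rfl⟩ := h
    rw [← map_pow]
    exact Ideal.mem_map_of_mem f (pow_mem_frobeniusPower hx _)
  | zero =>
    rw [zero_pow (pow_ne_zero _ (Fact.out : p.Prime).ne_zero)]
    exact Submodule.zero_mem _
  | add x y hx hy ihx ihy =>
    rw [add_pow_char_pow]
    exact Submodule.add_mem _ ihx ihy
  | smul r x hx ih =>
    rw [smul_eq_mul, mul_pow]
    exact Ideal.mul_mem_left _ _ ih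

lemma mul_mem_tightClosure {R : Type*} [CommRing R] {I : Ideal R} {a : R}
    (ha : a ∈ tightClosure p I) (r : R) : r * a ∈ tightClosure p I := by
  obtain ⟨c, hc, N, hN⟩ := ha
  refine ⟨c, hc, N, fun e he => ?_⟩
  have h : c * (r * a) ^ p ^ e = r ^ p ^ e * (c * a ^ p ^ e) := by ring
  rw [h]
  exact Ideal.mul_mem_left _ _ (hN e he)

def tightClosureIdeal (p : ℕ) [Fact p.Prime] {R : Type*} [CommRing R] [CharP R p]
    (I : Ideal R) : Ideal R where
  carrier := tightClosure p I
  zero_mem' := ⟨1, one_mem_primeComplement R, 0, fun e _ => by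
    rw [zero_pow (pow_ne_zero _ (Fact.out : p.Prime).ne_zero), mul_zero]
    exact Submodule.zero_mem _⟩
  add_mem' := by
    rintro a b ⟨c, hc, N, hN⟩ ⟨d, hd, M, hM⟩
    refine ⟨c * d, mul_mem_primeComplement hc hd, max N M, fun e he => ?_⟩
    rw [add_pow_char_pow]
    have h : c * d * (a ^ p ^ e + b ^ p ^ e)
        = d * (c * a ^ p ^ e) + c * (d * b ^ p ^ e) := by ring
    rw [h]
    exact Submodule.add_mem _
      (Ideal.mul_mem_left _ _ (hN e (le_trans (le_max_left _ _) he)))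
      (Ideal.mul_mem_left _ _ (hM e (le_trans (le_max_right _ _) he)))
  smul_mem' := fun r a ha => by
    simpa [smul_eq_mul] using mul_mem_tightClosure (p := p) ha r

lemma span_tightClosure {R : Type*} [CommRing R] [CharP R p] (I : Ideal R) :
    Ideal.span (tightClosure p I) = tightClosureIdeal p I := by
  have : (tightClosureIdeal p I : Set R) = tightClosure p I := rfl
  rw [← this]
  exact Submodule.span_eq _

lemma bot_mem_minimalPrimes_of_isDomain {R : Type*} [CommRing R] [IsDomain R] :
    (⊥ : Ideal R) ∈ minimalPrimes R :=
  ⟨⟨Ideal.bot_prime, le_rfl⟩, fun _ _ _ => bot_le⟩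

lemma ne_zero_of_mem_primeComplement {R : Type*} [CommRing R] [IsDomain R] {c : R}
    (hc : c ∈ primeComplement R) : c ≠ 0 := by
  intro h
  exact hc ⊥ bot_mem_minimalPrimes_of_isDomain (by simp [h])

lemma sInf_minimalPrimes_eq_nilradical (R : Type*) [CommRing R] :
    sInf (minimalPrimes R) = nilradical R :=
  Ideal.sInf_minimalPrimes

end Aux

section Main

variable (p : ℕ) [Fact p.Prime] (R : Type) [CommRing R] [IsNoetherianRing R] [CharP R p]
variable (I : Ideal R) (U : Submonoid R) (z : R)

theorem part1
    (hz : ∀ P ∈ minimalPrimes R, Disjoint (U : Set R) (P : Set R) →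
      algebraMap (R ⧸ P) (Localization (U.map (Ideal.Quotient.mk P)))
          (Ideal.Quotient.mk P z)
        ∈ tightClosure p
            (Ideal.map (algebraMap (R ⧸ P) (Localization (U.map (Ideal.Quotient.mk P))))
              (I.map (Ideal.Quotient.mk P)))) :
    algebraMap R (Localization U) z
        ∈ tightClosure p (Ideal.map (algebraMap R (Localization U)) I) := by
  classical
  set S := Localization U with hSdef
  set f : R →+* S := algebraMap R S with hfdef
  set J : Ideal S := I.map f with hJdef
  rcases subsingleton_or_nontrivial S with hS | hS
  · refine ⟨1, one_mem_primeComplement S, 0, fun e _ => ?_⟩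
    have h0 : (1 : S) * (f z) ^ p ^ e = 0 := Subsingleton.elim _ _
    rw [h0]
    exact Submodule.zero_mem _
  haveI : CharP S p := charP_of_ringHom (p := p) f
  haveI : IsNoetherianRing S := IsLocalization.isNoetherianRing U S inferInstance
  have claim : ∀ Q : Ideal S, Q ∈ minimalPrimes S →
      ∃ c : S, c ∉ Q ∧ ∃ N : ℕ, ∀ e : ℕ, N ≤ e →
        c * (f z) ^ p ^ e ∈ J.frobeniusPower (p ^ e) ⊔ Q := by
    intro Q hQ
    haveI hQp : Q.IsPrime := isPrime_of_mem_minimalPrimes hQ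
    set P : Ideal R := Q.comap f with hPdef
    haveI hPp : P.IsPrime := Ideal.IsPrime.comap f
    have hdisj : Disjoint (U : Set R) (P : Set R) := by
      rw [Set.disjoint_left]
      intro u hu hmem
      exact hQp.ne_top (Q.eq_top_of_isUnit_mem hmem (IsLocalization.map_units S ⟨u, hu⟩))
    have hPmin : P ∈ minimalPrimes R := by
      refine ⟨⟨hPp, bot_le⟩, ?_⟩
      rintro P' ⟨hP'p, -⟩ hle
      have hd' : Disjoint (U : Set R) (P' : Set R) :=
        hdisj.mono_right (show (P' : Set R) ≤ (P : Set R) from hle)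
      have hQ'p : (P'.map f).IsPrime :=
        IsLocalization.isPrime_of_isPrime_disjoint U S P' hP'p hd'
      have hQ'le : P'.map f ≤ Q := by
        conv_rhs => rw [← IsLocalization.map_comap U S Q]
        exact Ideal.map_mono hle
      have hQle : Q ≤ P'.map f := hQ.2 ⟨hQ'p, bot_le⟩ hQ'le
      calc P = Q.comap f := rfl
        _ ≤ (P'.map f).comap f := Ideal.comap_mono hQle
        _ = P' := IsLocalization.comap_map_of_isPrime_disjoint U S hP'p hd'
    have hzP := hz P hPmin hdisj
    set A := R ⧸ P with hAdef
    set π : R →+* A := Ideal.Quotient.mk P with hπdef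
    set T := Localization (U.map π) with hTdef
    obtain ⟨c', hc', N, hN⟩ := hzP
    set g : S →+* T := IsLocalization.map (T := U.map π) T π (Submonoid.le_comap_map U) with hgdef
    have hgf : ∀ x : R, g (f x) = algebraMap A T (π x) := fun x =>
      RingHom.congr_fun (IsLocalization.map_comp (Submonoid.le_comap_map U)) x
    have hker₁ : ∀ s ∈ Q, g s = 0 := by
      have hle : Q ≤ RingHom.ker g := by
        conv_lhs => rw [← IsLocalization.map_comap U S Q]
        refine Ideal.map_le_iff_le_comap.2 ?_
        intro x hx
        show g (f x) = 0
        rw [hgf, show π x = 0 from Ideal.Quotient.eq_zero_iff_mem.2 hx, map_zero]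
      exact fun s hs => hle hs
    have hker₂ : ∀ s : S, g s = 0 → s ∈ Q := by
      intro s hs
      obtain ⟨⟨r, u⟩, rfl⟩ := IsLocalization.mk'_surjective U s
      dsimp only at hs ⊢
      rw [hgdef, IsLocalization.map_mk', IsLocalization.mk'_eq_zero_iff] at hs
      obtain ⟨m, hm⟩ := hs
      obtain ⟨v, hv, hveq⟩ := m.2
      have hvr : v * r ∈ P := by
        apply Ideal.Quotient.eq_zero_iff_mem.1
        show π (v * r) = 0
        rw [map_mul, hveq, hm]
      have hfvr : f v * f r ∈ Q := by
        rw [← map_mul]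
        exact hvr
      have hfr : f r ∈ Q := by
        rcases hQp.mem_or_mem hfvr with h | h
        · exact absurd (Q.eq_top_of_isUnit_mem h (IsLocalization.map_units S ⟨v, hv⟩))
            hQp.ne_top
        · exact h
      rw [IsLocalization.mk'_eq_mul_mk'_one]
      exact Q.mul_mem_right _ hfr
    have hgsurj : Function.Surjective g := by
      intro t
      obtain ⟨⟨a, s⟩, rfl⟩ := IsLocalization.mk'_surjective (U.map π) t
      rcases s with ⟨sval, hsmem⟩
      obtain ⟨u, hu, rfl⟩ := hsmem
      obtain ⟨r, rfl⟩ := Ideal.Quotient.mk_surjective a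
      exact ⟨IsLocalization.mk' S r ⟨u, hu⟩, by rw [hgdef, IsLocalization.map_mk']⟩
    haveI : Nontrivial T := by
      refine nontrivial_of_ne 1 0 (fun h => hQp.ne_top ?_)
      have h1 : (1 : S) ∈ Q := hker₂ 1 (by rw [map_one, h])
      exact Q.eq_top_of_isUnit_mem h1 isUnit_one
    haveI : IsDomain T := by
      refine IsLocalization.isDomain_localization ?_
      rintro x hx
      obtain ⟨u, hu, rfl⟩ := hx
      refine mem_nonZeroDivisors_of_ne_zero (fun h0 => ?_)
      exact Set.disjoint_left.1 hdisj hu (Ideal.Quotient.eq_zero_iff_mem.1 h0)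
    have hc'0 : c' ≠ 0 := ne_zero_of_mem_primeComplement hc'
    obtain ⟨c, hcgc⟩ := hgsurj c'
    have hcQ : c ∉ Q := fun h => hc'0 (by rw [← hcgc]; exact hker₁ c h)
    haveI : CharP T p := charP_of_ringHom (p := p) (g.comp f)
    refine ⟨c, hcQ, N, fun e he => ?_⟩
    have h1 := hN e he
    have hmapmap : Ideal.map (algebraMap A T) (I.map π) = J.map g := by
      rw [hJdef, Ideal.map_map, Ideal.map_map]
      congr 1
      exact (IsLocalization.map_comp (Submonoid.le_comap_map U)).symm
    rw [hmapmap] at h1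
    have h2 := frobeniusPower_map_le (p := p) g J e h1
    have h3 : g (c * (f z) ^ p ^ e) ∈ (J.frobeniusPower (p ^ e)).map g := by
      rw [map_mul, map_pow, hcgc, hgf]
      exact h2
    have h4 : c * (f z) ^ p ^ e ∈ J.frobeniusPower (p ^ e) ⊔ Ideal.comap g ⊥ := by
      rw [← Ideal.comap_map_of_surjective g hgsurj]
      exact Ideal.mem_comap.2 h3
    have hkerQ : Ideal.comap g ⊥ = Q := by
      apply le_antisymm
      · intro s hs
        exact hker₂ s (Ideal.mem_bot.1 (Ideal.mem_comap.1 hs))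
      · intro s hs
        exact Ideal.mem_comap.2 (Ideal.mem_bot.2 (hker₁ s hs))
    rwa [hkerQ] at h4
  choose! c hcQ N hcN using claim
  have hfin := minimalPrimes.finite_of_isNoetherianRing S
  set F : Finset (Ideal S) := hfin.toFinset with hF
  have hmemF : ∀ Q : Ideal S, Q ∈ F ↔ Q ∈ minimalPrimes S := fun Q => hfin.mem_toFinset
  have dclaim : ∀ Q : Ideal S, Q ∈ minimalPrimes S →
      ∃ d : S, d ∈ (F.erase Q).inf id ∧ d ∉ Q := by
    intro Q hQ
    haveI hQp : Q.IsPrime := isPrime_of_mem_minimalPrimes hQ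
    have hnle : ¬ ((F.erase Q).inf id ≤ Q) := by
      intro hle
      obtain ⟨Q', hQ'F, hQ'le⟩ := (hQp.inf_le').1 hle
      have hQ'mem : Q' ∈ minimalPrimes S := (hmemF Q').1 (Finset.mem_of_mem_erase hQ'F)
      have hQQ' : Q ≤ Q' := hQ.2 ⟨isPrime_of_mem_minimalPrimes hQ'mem, bot_le⟩ hQ'le
      exact (Finset.ne_of_mem_erase hQ'F) (le_antisymm hQ'le hQQ')
    rw [SetLike.not_le_iff_exists] at hnle
    obtain ⟨d, hd1, hd2⟩ := hnle
    exact ⟨d, hd1, hd2⟩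
  choose! d hd1 hd2 using dclaim
  set ctot : S := ∑ Q ∈ F, d Q * c Q with hctot
  set N₀ : ℕ := F.sup N with hN₀
  have hctotPC : ctot ∈ primeComplement S := by
    intro Q₀ hQ₀ hmem
    haveI hQ₀p : Q₀.IsPrime := isPrime_of_mem_minimalPrimes hQ₀
    have hQ₀F : Q₀ ∈ F := (hmemF Q₀).2 hQ₀
    have hrest : ∑ Q ∈ F.erase Q₀, d Q * c Q ∈ Q₀ := by
      refine Submodule.sum_mem _ ?_
      intro Q hQF
      have hdQ : d Q ∈ Q₀ := by
        have hQmem : Q ∈ minimalPrimes S := (hmemF Q).1 (Finset.mem_of_mem_erase hQF)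
        have h0 : Q₀ ∈ F.erase Q :=
          Finset.mem_erase.2 ⟨(Finset.ne_of_mem_erase hQF).symm, hQ₀F⟩
        exact (Finset.inf_le h0 : (F.erase Q).inf id ≤ Q₀) (hd1 Q hQmem)
      exact Ideal.mul_mem_right _ _ hdQ
    have hsum : d Q₀ * c Q₀ + ∑ Q ∈ F.erase Q₀, d Q * c Q = ctot := by
      rw [hctot]
      exact Finset.add_sum_erase F (fun Q => d Q * c Q) hQ₀F
    have hdc : d Q₀ * c Q₀ ∈ Q₀ := by
      have heq : d Q₀ * c Q₀ = ctot - ∑ Q ∈ F.erase Q₀, d Q * c Q :=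
        eq_sub_of_add_eq hsum
      rw [heq]
      exact Q₀.sub_mem hmem hrest
    rcases hQ₀p.mem_or_mem hdc with h | h
    · exact hd2 Q₀ hQ₀ h
    · exact hcQ Q₀ hQ₀ h
  have hnilmem : ∀ e : ℕ, N₀ ≤ e →
      ctot * (f z) ^ p ^ e ∈ J.frobeniusPower (p ^ e) ⊔ nilradical S := by
    intro e he
    rw [hctot, Finset.sum_mul]
    refine Submodule.sum_mem _ ?_
    intro Q hQF
    have hQmem : Q ∈ minimalPrimes S := (hmemF Q).1 hQF
    have hNe : N Q ≤ e := le_trans (Finset.le_sup hQF) he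
    have hQmem2 := hcN Q hQmem e hNe
    rw [Submodule.mem_sup] at hQmem2
    obtain ⟨a, ha, b, hb, hab⟩ := hQmem2
    rw [mul_assoc, ← hab, mul_add]
    refine Submodule.add_mem _
      (Submodule.mem_sup_left (Ideal.mul_mem_left _ _ ha)) (Submodule.mem_sup_right ?_)
    have hmem' : d Q * b ∈ sInf (minimalPrimes S) := by
      rw [Submodule.mem_sInf]
      intro Q' hQ'
      have hQ'F : Q' ∈ F := (hmemF Q').2 hQ'
      by_cases hqq : Q' = Q
      · exact Ideal.mul_mem_left _ _ (hqq ▸ hb)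
      · have h0 : Q' ∈ F.erase Q := Finset.mem_erase.2 ⟨hqq, hQ'F⟩
        exact Ideal.mul_mem_right _ _
          ((Finset.inf_le h0 : (F.erase Q).inf id ≤ Q') (hd1 Q hQmem))
    rwa [sInf_minimalPrimes_eq_nilradical] at hmem'
  obtain ⟨k, hk⟩ := IsNoetherianRing.isNilpotent_nilradical S
  refine ⟨ctot ^ p ^ k, pow_mem_primeComplement _ hctotPC, N₀ + k, fun e he => ?_⟩
  have hke : k ≤ e := le_trans (Nat.le_add_left k N₀) he
  have hse : (e - k) + k = e := Nat.sub_add_cancel hke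
  have hN₀e₂ : N₀ ≤ e - k := by omega
  have hsup := hnilmem (e - k) hN₀e₂
  rw [Submodule.mem_sup] at hsup
  obtain ⟨a, ha, n, hn, han⟩ := hsup
  have hkle : k ≤ p ^ k := Nat.le_of_lt (Nat.lt_pow_self (n := k) (Fact.out : p.Prime).one_lt)
  have hnzero : n ^ p ^ k = 0 := by
    have h1 : n ^ k = 0 := by
      have h2 : n ^ k ∈ nilradical S ^ k := Ideal.pow_mem_pow hn k
      rw [hk] at h2
      simpa using h2
    calc n ^ p ^ k = n ^ k * n ^ (p ^ k - k) := by rw [← pow_add]; congr 1; omega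
      _ = 0 := by rw [h1, zero_mul]
  have hkey : (ctot * (f z) ^ p ^ (e - k)) ^ p ^ k = a ^ p ^ k := by
    rw [← han, add_pow_char_pow, hnzero, add_zero]
  have hlhs : (ctot * (f z) ^ p ^ (e - k)) ^ p ^ k = ctot ^ p ^ k * (f z) ^ p ^ e := by
    rw [mul_pow, ← pow_mul, ← pow_add, hse]
  rw [← hlhs, hkey]
  have hfin2 := frobeniusPower_pow_mem (p := p) k ha
  rwa [hse] at hfin2

theorem part2
    (hz : ∀ P ∈ minimalPrimes R, Disjoint (U : Set R) (P : Set R) →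
      algebraMap (R ⧸ P) (Localization (U.map (Ideal.Quotient.mk P)))
          (Ideal.Quotient.mk P z)
        ∈ tightClosure p
            (Ideal.map (algebraMap (R ⧸ P) (Localization (U.map (Ideal.Quotient.mk P))))
              (I.map (Ideal.Quotient.mk P))))
    (hcomm : ∀ P ∈ minimalPrimes R, TightClosureCommutesWithLocalization p (R ⧸ P)) :
    ∃ u ∈ U, ∀ P ∈ minimalPrimes R, Disjoint (U : Set R) (P : Set R) →
      Ideal.Quotient.mk P (u * z) ∈ tightClosure p (I.map (Ideal.Quotient.mk P)) := by
  classical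
  have claim : ∀ P : Ideal R, ∃ u : R, u ∈ U ∧
      (P ∈ minimalPrimes R → Disjoint (U : Set R) (P : Set R) →
        Ideal.Quotient.mk P (u * z) ∈ tightClosure p (I.map (Ideal.Quotient.mk P))) := by
    intro P
    by_cases hP : P ∈ minimalPrimes R ∧ Disjoint (U : Set R) (P : Set R)
    · obtain ⟨hPmin, hdisj⟩ := hP
      haveI hPp : P.IsPrime := isPrime_of_mem_minimalPrimes hPmin
      haveI : Nontrivial (R ⧸ P) := Ideal.Quotient.nontrivial_iff.mpr hPp.ne_top
      haveI : CharP (R ⧸ P) p := charP_of_ringHom (p := p) (Ideal.Quotient.mk P)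
      have h1 := hz P hPmin hdisj
      have h2 := hcomm P hPmin (I.map (Ideal.Quotient.mk P)) (U.map (Ideal.Quotient.mk P))
      rw [← h2] at h1
      rw [span_tightClosure (p := p)] at h1
      have h1' : algebraMap (R ⧸ P) (Localization (U.map (Ideal.Quotient.mk P)))
            (Ideal.Quotient.mk P z)
          ∈ Ideal.map (algebraMap (R ⧸ P) (Localization (U.map (Ideal.Quotient.mk P))))
            (tightClosureIdeal p (I.map (Ideal.Quotient.mk P))) := h1
      rw [← IsLocalization.mk'_one (M := U.map (Ideal.Quotient.mk P))
          (Localization (U.map (Ideal.Quotient.mk P))) (Ideal.Quotient.mk P z),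
        IsLocalization.mk'_mem_map_algebraMap_iff] at h1'
      obtain ⟨s, hs, hmem⟩ := h1'
      obtain ⟨u, hu, rfl⟩ := hs
      refine ⟨u, hu, fun _ _ => ?_⟩
      rw [map_mul]
      exact hmem
    · exact ⟨1, U.one_mem, fun h1 h2 => absurd ⟨h1, h2⟩ hP⟩
  choose u hu1 hu2 using claim
  have hfin := minimalPrimes.finite_of_isNoetherianRing R
  refine ⟨∏ P ∈ hfin.toFinset, u P, Submonoid.prod_mem U (fun P _ => hu1 P), ?_⟩
  intro P₀ hP₀ hdisj
  have hP₀F : P₀ ∈ hfin.toFinset := hfin.mem_toFinset.2 hP₀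
  have hprod : u P₀ * ∏ P ∈ hfin.toFinset.erase P₀, u P = ∏ P ∈ hfin.toFinset, u P :=
    Finset.mul_prod_erase _ _ hP₀F
  have hsplit : (∏ P ∈ hfin.toFinset, u P) * z
      = (∏ P ∈ hfin.toFinset.erase P₀, u P) * (u P₀ * z) := by
    rw [← hprod]; ring
  rw [hsplit, map_mul]
  exact mul_mem_tightClosure (p := p) (hu2 P₀ hP₀ hdisj) _

end Main


/-- If, for every minimal prime `P` of `R` disjoint from the multiplicative set `U`,
the image of `z/1` in `(R/P)[U⁻¹]` lies in the tight closure of `I·(R/P)[U⁻¹]`, then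
`z/1` lies in the tight closure of `I·R[U⁻¹]`; equivalently, if tight closure commutes
with localization in each `R/P`, there is a single `u ∈ U` with `u·z ∈ (I·(R/P))*`
for every minimal prime `P` of `R` disjoint from `U`. -/
theorem mem_tightClosure_localization_of_quotients
    (p : ℕ) [Fact p.Prime] (R : Type) [CommRing R] [IsNoetherianRing R] [CharP R p]
    (I : Ideal R) (U : Submonoid R) (z : R)
    (hz : ∀ P ∈ minimalPrimes R, Disjoint (U : Set R) (P : Set R) →
      algebraMap (R ⧸ P) (Localization (U.map (Ideal.Quotient.mk P)))
          (Ideal.Quotient.mk P z)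
        ∈ tightClosure p
            (Ideal.map (algebraMap (R ⧸ P) (Localization (U.map (Ideal.Quotient.mk P))))
              (I.map (Ideal.Quotient.mk P)))) :
    algebraMap R (Localization U) z
        ∈ tightClosure p (Ideal.map (algebraMap R (Localization U)) I) ∧
      ((∀ P ∈ minimalPrimes R, TightClosureCommutesWithLocalization p (R ⧸ P)) →
        ∃ u ∈ U, ∀ P ∈ minimalPrimes R, Disjoint (U : Set R) (P : Set R) →
          Ideal.Quotient.mk P (u * z) ∈ tightClosure p (I.map (Ideal.Quotient.mk P))) :=
  ⟨part1 p R I U z hz, fun hcomm => part2 p R I U z hz hcomm⟩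
end

section
/- Let R be a commutative Noetherian ring of prime characteristic p such that for each minimal prime P of R, the domain R/P admits a module-finite integral extension domain that is F-regular. Then tight closure commutes with localization in R. -/
section FrobLemmas

variable {A B : Type*} [CommRing A] [CommRing B]

lemma frob_def (I : Ideal A) (q : ℕ) :
    I.frobeniusPower q = Ideal.span ((fun x => x ^ q) '' (I : Set A)) := rfl

lemma pow_mem_frob {I : Ideal A} {x : A} (hx : x ∈ I) (q : ℕ) :
    x ^ q ∈ I.frobeniusPower q :=
  Ideal.subset_span ⟨x, hx, rfl⟩

lemma charP_of_prime_cast_zero [Nontrivial A] {p : ℕ}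
    (hp : p.Prime) (h0 : (p : A) = 0) : CharP A p :=
  (CharP.charP_iff_prime_eq_zero hp).mpr h0

lemma frob_span {p : ℕ} (hp : p.Prime) [CharP A p] (s : Set A) (e : ℕ) :
    (Ideal.span s).frobeniusPower (p ^ e) = Ideal.span ((fun x => x ^ p ^ e) '' s) := by
  haveI := Fact.mk hp
  haveI : ExpChar A p := .prime hp
  have hkey : ∀ y, y ∈ Ideal.span s → y ^ p ^ e ∈ Ideal.span ((fun x => x ^ p ^ e) '' s) := by
    intro y hy
    induction hy using Submodule.span_induction with
    | mem x hx => exact Ideal.subset_span ⟨x, hx, rfl⟩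
    | zero =>
        rw [zero_pow ((pow_pos hp.pos e).ne')]
        exact Ideal.zero_mem _
    | add a b ha hb iha ihb =>
        rw [add_pow_char_pow]
        exact Ideal.add_mem _ iha ihb
    | smul a x hx ih =>
        rw [smul_eq_mul, mul_pow]
        exact Ideal.mul_mem_left _ _ ih
  apply le_antisymm
  · rw [frob_def]
    refine Ideal.span_le.mpr ?_
    rintro _ ⟨y, hy, rfl⟩
    exact hkey y hy
  · refine Ideal.span_le.mpr ?_
    rintro _ ⟨x, hx, rfl⟩
    exact pow_mem_frob (Ideal.subset_span hx) _

lemma map_eq_span_image (f : A →+* B) (I : Ideal A) :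
    I.map f = Ideal.span (⇑f '' (I : Set A)) := rfl

lemma frob_map_le (f : A →+* B) (I : Ideal A) (q : ℕ) :
    Ideal.map f (I.frobeniusPower q) ≤ (Ideal.map f I).frobeniusPower q := by
  rw [frob_def, Ideal.map_span]
  refine Ideal.span_le.mpr ?_
  rintro _ ⟨_, ⟨x, hx, rfl⟩, rfl⟩
  rw [map_pow]
  exact pow_mem_frob (Ideal.mem_map_of_mem f hx) q

lemma frob_map {p : ℕ} (hp : p.Prime) [CharP B p] (f : A →+* B) (I : Ideal A) (e : ℕ) :
    Ideal.map f (I.frobeniusPower (p ^ e)) = (Ideal.map f I).frobeniusPower (p ^ e) := by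
  rw [frob_def, Ideal.map_span, map_eq_span_image, frob_span hp,
    Set.image_image, Set.image_image]
  exact congrArg _ (Set.image_congr' (fun x => map_pow f x _))

lemma frob_frob {p : ℕ} (hp : p.Prime) [CharP A p] (I : Ideal A) (e m : ℕ) :
    (I.frobeniusPower (p ^ e)).frobeniusPower (p ^ m) = I.frobeniusPower (p ^ (e + m)) := by
  rw [frob_def (I := I), frob_span hp, Set.image_image, frob_def]
  exact congrArg _ (Set.image_congr' (fun x => by rw [← pow_mul, ← pow_add]))

end FrobLemmas

section DomainLemmas

variable {A : Type*} [CommRing A]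

lemma minimalPrimes_of_isDomain [IsDomain A] : minimalPrimes A = {⊥} := by
  ext P
  simp only [Set.mem_singleton_iff]
  constructor
  · intro hP
    exact le_bot_iff.mp (hP.2 ⟨Ideal.bot_prime, bot_le⟩ bot_le)
  · rintro rfl
    exact ⟨⟨Ideal.bot_prime, le_rfl⟩, fun y _ _ => bot_le⟩

lemma primeComplement_domain [IsDomain A] :
    primeComplement A = {x : A | x ≠ 0} := by
  ext x
  simp [primeComplement, minimalPrimes_of_isDomain, Ideal.mem_bot]

lemma primeComplement_pow {c : A} (hc : c ∈ primeComplement A) (n : ℕ) :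
    c ^ n ∈ primeComplement A :=
  fun P hP hmem => hc P hP (hP.1.1.mem_of_pow_mem n hmem)

lemma mem_nilradical_of_forall_minimal {x : A}
    (h : ∀ P ∈ minimalPrimes A, x ∈ P) : x ∈ nilradical A := by
  rw [nilradical_eq_sInf]
  refine Submodule.mem_sInf.mpr fun J hJ => ?_
  haveI : Ideal.IsPrime J := hJ
  obtain ⟨P, hP, hPle⟩ := Ideal.exists_minimalPrimes_le (bot_le : ⊥ ≤ J)
  exact hPle (h P hP)

end DomainLemmas

structure ExtData (p : ℕ) (A : Type) [CommRing A] (P : Ideal A) where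
  T : Type
  [cr : CommRing T]
  [dom : IsDomain T]
  f : A →+* T
  ker_eq : RingHom.ker f = P
  fin : f.Finite
  closed : ∀ J : Ideal T, tightClosure p J = (J : Set T)

attribute [instance] ExtData.cr ExtData.dom

section Functional

variable {D T : Type*} [CommRing D] [IsDomain D] [CommRing T] [IsDomain T]

lemma exists_functional (g : D →+* T) (hginj : Function.Injective g) (hgfin : g.Finite) :
    ∃ φ : T → D, (∀ x y, φ (x + y) = φ x + φ y) ∧ (∀ d t, φ (g d * t) = d * φ t) ∧ φ 1 ≠ 0 := by
  classical
  let K := FractionRing D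
  let F := FractionRing T
  have hunit : ∀ y : nonZeroDivisors D, IsUnit (((algebraMap T F).comp g) y) := by
    rintro ⟨y, hy⟩
    have hy0 : y ≠ 0 := nonZeroDivisors.ne_zero hy
    have hgy : g y ≠ 0 := fun hc => hy0 (hginj (by rwa [map_zero]))
    exact IsLocalization.map_units (M := nonZeroDivisors T) F
      ⟨g y, mem_nonZeroDivisors_of_ne_zero hgy⟩
  let ρ : K →+* F := IsLocalization.lift hunit
  have hρ : ∀ d : D, ρ (algebraMap D K d) = algebraMap T F (g d) :=
    fun d => IsLocalization.lift_eq hunit d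
  letI : Algebra K F := ρ.toAlgebra
  have hsmul : ∀ (k : K) (x : F), k • x = ρ k * x := fun k x => rfl
  -- a dual functional not vanishing at 1
  have h1 : (1 : F) ≠ 0 := one_ne_zero
  have hdual : ∃ ψ : Module.Dual K F, ψ 1 ≠ 0 := by
    by_contra hcon
    push_neg at hcon
    exact h1 ((Module.forall_dual_apply_eq_zero_iff K (1 : F)).mp hcon)
  obtain ⟨ψ, hψ⟩ := hdual
  -- generators of T over D
  letI : Algebra D T := g.toAlgebra
  haveI hfin : Module.Finite D T := hgfin
  obtain ⟨s, hs⟩ := Module.finite_def.mp hfin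
  -- common denominator
  obtain ⟨b, hb⟩ := IsLocalization.exist_integer_multiples (nonZeroDivisors D) s
    (fun t => ψ (algebraMap T F t))
  have hbsmul : ∀ x : K, (b : D) • x = algebraMap D K (b : D) * x := fun x => by
    rw [Algebra.smul_def]
  have key : ∀ t : T, ∃ d : D,
      algebraMap D K d = algebraMap D K (b : D) * ψ (algebraMap T F t) := by
    intro t
    have ht : t ∈ Submodule.span D (s : Set T) := by rw [hs]; trivial
    induction ht using Submodule.span_induction with
    | mem x hx =>
        obtain ⟨d, hd⟩ := hb x hx
        exact ⟨d, by rw [hd]; exact hbsmul _⟩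
    | zero => exact ⟨0, by rw [map_zero, map_zero, map_zero, mul_zero]⟩
    | add a c ha hc iha ihc =>
        obtain ⟨d1, hd1⟩ := iha
        obtain ⟨d2, hd2⟩ := ihc
        exact ⟨d1 + d2, by rw [map_add, map_add, map_add, mul_add, hd1, hd2]⟩
    | smul d0 t0 ht0 ih =>
        obtain ⟨d1, hd1⟩ := ih
        refine ⟨d0 * d1, ?_⟩
        have e0 : (d0 • t0) = g d0 * t0 := by
          rw [Algebra.smul_def]
          rfl
        have e1 : algebraMap T F (d0 • t0) = algebraMap D K d0 • algebraMap T F t0 := by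
          rw [e0, map_mul, hsmul, hρ]
        calc algebraMap D K (d0 * d1)
            = algebraMap D K d0 * algebraMap D K d1 := map_mul _ _ _
          _ = algebraMap D K d0 * (algebraMap D K (b : D) * ψ (algebraMap T F t0)) := by
              rw [hd1]
          _ = algebraMap D K (b : D) * (algebraMap D K d0 * ψ (algebraMap T F t0)) := by
              ring
          _ = algebraMap D K (b : D) * ψ (algebraMap D K d0 • algebraMap T F t0) := by
              rw [map_smul, smul_eq_mul]
          _ = algebraMap D K (b : D) * ψ (algebraMap T F (d0 • t0)) := by rw [e1]
  have injK : Function.Injective (algebraMap D K) := IsFractionRing.injective D K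
  choose φ hφ using key
  refine ⟨φ, ?_, ?_, ?_⟩
  · intro x y
    apply injK
    simp only [hφ, map_add, mul_add]
  · intro d t
    apply injK
    have e1 : algebraMap T F (g d * t) = algebraMap D K d • algebraMap T F t := by
      rw [map_mul, hsmul, hρ]
    simp only [hφ, map_mul, e1, map_smul, smul_eq_mul]
    ring
  · intro hc
    have h2 := hφ 1
    rw [hc, map_zero, map_one] at h2
    have hb0 : algebraMap D K (b : D) ≠ 0 :=
      fun hc2 => nonZeroDivisors.ne_zero b.2 (injK (by rwa [map_zero]))
    rcases mul_eq_zero.mp h2.symm with h | h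
    · exact hb0 h
    · exact hψ h

end Functional

section Contract

variable {p : ℕ}

lemma contract_le_tight (hp : p.Prime) {D T : Type*} [CommRing D] [IsDomain D]
    [CommRing T] [IsDomain T] [CharP T p]
    (g : D →+* T) (hginj : Function.Injective g) (hgfin : g.Finite)
    (I : Ideal D) (z : D) (hz : g z ∈ I.map g) :
    ∃ c : D, c ≠ 0 ∧ ∀ e : ℕ, c * z ^ p ^ e ∈ I.frobeniusPower (p ^ e) := by
  classical
  obtain ⟨φ, φadd, φlin, φ1⟩ := exists_functional g hginj hgfin
  refine ⟨φ 1, φ1, fun e => ?_⟩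
  have h1 : (g z) ^ p ^ e ∈ (I.map g).frobeniusPower (p ^ e) := pow_mem_frob hz _
  rw [map_eq_span_image, frob_span hp] at h1
  obtain ⟨cf, hcfs, hcfsum⟩ := Submodule.mem_span_set.mp h1
  -- φ as an additive hom
  let φM : T →+ D := AddMonoidHom.mk' φ φadd
  have hφsum : φ ((g z) ^ p ^ e) ∈ I.frobeniusPower (p ^ e) := by
    rw [← hcfsum]
    rw [Finsupp.sum]
    have : φM (∑ a ∈ cf.support, cf a • a) = ∑ a ∈ cf.support, φM (cf a • a) :=
      map_sum φM _ _
    rw [show φ (∑ a ∈ cf.support, cf a • a) = φM (∑ a ∈ cf.support, cf a • a) from rfl, this]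
    refine Ideal.sum_mem _ fun a ha => ?_
    obtain ⟨-, ⟨x, hx, rfl⟩, rfl⟩ := hcfs ha
    have : φM (cf ((g x) ^ p ^ e) • (g x) ^ p ^ e) = x ^ p ^ e * φ (cf ((g x) ^ p ^ e)) := by
      show φ _ = _
      rw [smul_eq_mul, ← map_pow, mul_comm, φlin]
    rw [this]
    exact Ideal.mul_mem_right _ _ (pow_mem_frob hx _)
  have h2 : φ ((g z) ^ p ^ e) = φ 1 * z ^ p ^ e := by
    rw [← map_pow, show g (z ^ p ^ e) = g (z ^ p ^ e) * 1 from (mul_one _).symm, φlin,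
      mul_comm]
  rwa [h2] at hφsum

lemma step_minimal (hp : p.Prime) {A : Type*} [CommRing A] [CharP A p]
    {P : Ideal A} (hP : P.IsPrime) {T : Type*} [CommRing T] [IsDomain T]
    (f : A →+* T) (hker : RingHom.ker f = P) (hfin : f.Finite)
    (I : Ideal A) (z : A) (hz : f z ∈ I.map f) :
    ∃ c : A, c ∉ P ∧ ∀ e : ℕ, c * z ^ p ^ e ∈ I.frobeniusPower (p ^ e) ⊔ P := by
  classical
  haveI := hP
  haveI : CharP T p := by
    refine charP_of_prime_cast_zero hp ?_
    have h0 : (p : T) = f ((p : ℕ) : A) := (map_natCast f p).symm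
    rw [h0, CharP.cast_eq_zero A p, map_zero]
  haveI : CharP (A ⧸ P) p := by
    refine charP_of_prime_cast_zero hp ?_
    have h0 : (p : A ⧸ P) = Ideal.Quotient.mk P ((p : ℕ) : A) := (map_natCast _ p).symm
    rw [h0, CharP.cast_eq_zero A p, map_zero]
  set π := Ideal.Quotient.mk P with hπ
  have hfP : ∀ a ∈ P, f a = 0 := by
    intro a ha
    rw [← RingHom.mem_ker, hker]
    exact ha
  set g : A ⧸ P →+* T := Ideal.Quotient.lift P f hfP with hg
  have hgπ : ∀ a : A, g (π a) = f a := fun a => Ideal.Quotient.lift_mk P f hfP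
  have hcomp : g.comp π = f := RingHom.ext hgπ
  have hginj : Function.Injective g := by
    rw [RingHom.injective_iff_ker_eq_bot, Ideal.ker_quotient_lift f hfP, hker]
    exact Ideal.map_quotient_self P
  have hgfin : g.Finite := by
    letI : Algebra A T := f.toAlgebra
    letI : Algebra (A ⧸ P) T := g.toAlgebra
    haveI : IsScalarTower A (A ⧸ P) T :=
      IsScalarTower.of_algebraMap_eq fun a => (hgπ a).symm
    haveI hMF : Module.Finite A T := hfin
    exact Module.Finite.of_restrictScalars_finite A (A ⧸ P) T
  have hz' : g (π z) ∈ (I.map π).map g := by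
    rw [Ideal.map_map, hcomp, hgπ]
    exact hz
  obtain ⟨cb, hcb0, hcbe⟩ := contract_le_tight hp g hginj hgfin (I.map π) (π z) hz'
  obtain ⟨c, hc⟩ := Ideal.Quotient.mk_surjective cb
  refine ⟨c, ?_, fun e => ?_⟩
  · intro hcP
    rw [← hc] at hcb0
    exact hcb0 (Ideal.Quotient.eq_zero_iff_mem.mpr hcP)
  · have h3 := hcbe e
    rw [← hc] at h3
    have h4 : π (c * z ^ p ^ e) ∈ (I.map π).frobeniusPower (p ^ e) := by
      rw [map_mul, map_pow]
      exact h3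
    rw [← frob_map hp π I e] at h4
    have h5 := Ideal.mem_comap.mpr h4
    rwa [Ideal.comap_map_of_surjective π Ideal.Quotient.mk_surjective,
      ← RingHom.ker_eq_comap_bot, Ideal.mk_ker] at h5

end Contract

section Main

variable {p : ℕ}

lemma main_eq (hp : p.Prime) (A : Type) [CommRing A] [IsNoetherianRing A] [CharP A p]
    (E : ∀ P : Ideal A, P ∈ minimalPrimes A → ExtData p A P) (I : Ideal A) :
    tightClosure p I = ((⨅ P : {P : Ideal A // P ∈ minimalPrimes A},
      Ideal.comap (E P.1 P.2).f (Ideal.map (E P.1 P.2).f I) : Ideal A) : Set A) := by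
  classical
  haveI := Fact.mk hp
  ext z
  simp only [SetLike.mem_coe, Submodule.mem_iInf]
  constructor
  · rintro ⟨c, hc, N, hN⟩ ⟨P, hP⟩
    set Ed := E P hP with hEd
    rw [Ideal.mem_comap]
    have hmem : Ed.f z ∈ tightClosure p (I.map Ed.f) := by
      refine ⟨Ed.f c, ?_, N, fun e he => ?_⟩
      · rw [primeComplement_domain]
        intro h0
        exact hc P hP (by
          rw [← Ed.ker_eq, RingHom.mem_ker]
          exact h0)
      · have h1 := hN e he
        have h2 : Ed.f (c * z ^ p ^ e) ∈ Ideal.map Ed.f (I.frobeniusPower (p ^ e)) :=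
          Ideal.mem_map_of_mem _ h1
        rw [map_mul, map_pow] at h2
        exact frob_map_le Ed.f I (p ^ e) h2
    rw [Ed.closed (I.map Ed.f)] at hmem
    exact hmem
  · intro hz
    rcases subsingleton_or_nontrivial A with hA | hA
    · refine ⟨1, ?_, 0, fun e _ => ?_⟩
      · intro P hP
        have hPT : P = ⊤ := by
          ext x
          simp only [Submodule.mem_top, iff_true]
          have : x = 0 := Subsingleton.elim x 0
          rw [this]; exact P.zero_mem
        exact absurd hPT hP.1.1.ne_top
      · have : (1 * z ^ p ^ e : A) = 0 := Subsingleton.elim _ _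
        rw [this]; exact Ideal.zero_mem _
    -- nontrivial case
    have hsfin : (minimalPrimes A).Finite := minimalPrimes.finite_of_isNoetherianRing A
    set sF : Finset (Ideal A) := hsfin.toFinset with hsF
    have hmemsF : ∀ P : Ideal A, P ∈ sF ↔ P ∈ minimalPrimes A := fun P =>
      hsfin.mem_toFinset
    -- step data
    have hstep : ∀ P (hP : P ∈ minimalPrimes A),
        ∃ c, c ∉ P ∧ ∀ e, c * z ^ p ^ e ∈ I.frobeniusPower (p ^ e) ⊔ P := by
      intro P hP
      exact step_minimal hp hP.1.1 (E P hP).f (E P hP).ker_eq (E P hP).fin I z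
        (hz ⟨P, hP⟩)
    choose cP hcP1 hcP2 using hstep
    -- separating elements
    have hd : ∀ P (hP : P ∈ minimalPrimes A),
        ∃ d, (∀ P' ∈ minimalPrimes A, P' ≠ P → d ∈ P') ∧ d ∉ P := by
      intro P hP
      have hnle : ¬ ((sF.erase P).inf id ≤ P) := by
        intro hle
        obtain ⟨P', hP's, hP'le⟩ := (hP.1.1.inf_le').mp hle
        have hP'min : P' ∈ minimalPrimes A := (hmemsF P').mp (Finset.mem_of_mem_erase hP's)
        have : P ≤ P' := hP.2 ⟨hP'min.1.1, bot_le⟩ hP'le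
        exact (Finset.ne_of_mem_erase hP's) (le_antisymm hP'le this)
      obtain ⟨d, hd1, hd2⟩ := SetLike.not_le_iff_exists.mp hnle
      refine ⟨d, fun P' hP' hne => ?_, hd2⟩
      have : P' ∈ sF.erase P := Finset.mem_erase.mpr ⟨hne, (hmemsF P').mpr hP'⟩
      exact (Finset.inf_le this : (sF.erase P).inf id ≤ P') hd1
    choose dP hdP1 hdP2 using hd
    -- the combined multiplier
    set c : A := ∑ P ∈ sF.attach, dP P.1 ((hmemsF P.1).mp P.2) * cP P.1 ((hmemsF P.1).mp P.2)
      with hcdef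
    have hcmem : c ∈ primeComplement A := by
      intro P0 hP0 hc0
      have hP0s : P0 ∈ sF := (hmemsF P0).mpr hP0
      have hP0a : (⟨P0, hP0s⟩ : {x // x ∈ sF}) ∈ sF.attach := Finset.mem_attach _ _
      rw [hcdef, ← Finset.add_sum_erase _ _ hP0a] at hc0
      have hrest : ∑ P ∈ sF.attach.erase ⟨P0, hP0s⟩,
          dP P.1 ((hmemsF P.1).mp P.2) * cP P.1 ((hmemsF P.1).mp P.2) ∈ P0 := by
        refine Ideal.sum_mem _ fun Q hQ => ?_
        have hQne : Q.1 ≠ P0 := by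
          intro hqe
          exact (Finset.ne_of_mem_erase hQ) (Subtype.ext hqe)
        exact Ideal.mul_mem_right _ _ (hdP1 Q.1 _ P0 hP0 (fun hPe => hQne (hPe ▸ rfl)))
      have hfirst : dP P0 ((hmemsF P0).mp hP0s) * cP P0 ((hmemsF P0).mp hP0s) ∈ P0 := by
        have := P0.sub_mem hc0 hrest
        simpa using this
      rcases hP0.1.1.mem_or_mem hfirst with h | h
      · exact hdP2 P0 _ h
      · exact hcP1 P0 _ h
    -- nilpotency
    obtain ⟨k, hk⟩ := IsNoetherianRing.isNilpotent_nilradical A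
    have hcz : ∀ e, c * z ^ p ^ e ∈ I.frobeniusPower (p ^ e) ⊔ nilradical A := by
      intro e
      rw [hcdef, Finset.sum_mul]
      refine Ideal.sum_mem _ fun Q _ => ?_
      have h1 := hcP2 Q.1 ((hmemsF Q.1).mp Q.2) e
      obtain ⟨a, ha, b, hb, hab⟩ := Submodule.mem_sup.mp h1
      have : dP Q.1 ((hmemsF Q.1).mp Q.2) * cP Q.1 ((hmemsF Q.1).mp Q.2) * z ^ p ^ e
          = dP Q.1 ((hmemsF Q.1).mp Q.2) * a + dP Q.1 ((hmemsF Q.1).mp Q.2) * b := by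
        rw [mul_assoc, ← hab, mul_add]
      rw [this]
      refine Submodule.add_mem_sup (Ideal.mul_mem_left _ _ ha) ?_
      refine mem_nilradical_of_forall_minimal fun P' hP' => ?_
      by_cases hPQ : P' = Q.1
      · exact Ideal.mul_mem_left _ _ (hPQ ▸ hb)
      · exact Ideal.mul_mem_right _ _ (hdP1 Q.1 _ P' hP' hPQ)
    -- raise to Frobenius power
    haveI : ExpChar A p := .prime hp
    obtain ⟨m, hm⟩ : ∃ m, k ≤ p ^ m := ⟨k, (Nat.lt_pow_self (n := k) hp.one_lt).le⟩
    refine ⟨c ^ p ^ m, primeComplement_pow hcmem _, m, fun e' he' => ?_⟩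
    obtain ⟨e, rfl⟩ : ∃ e, e' = e + m := ⟨e' - m, (Nat.sub_add_cancel he').symm⟩
    obtain ⟨a, ha, b, hb, hab⟩ := Submodule.mem_sup.mp (hcz e)
    have hfrob : (c * z ^ p ^ e) ^ p ^ m = a ^ p ^ m + b ^ p ^ m := by
      rw [← hab, add_pow_char_pow]
    have hb0 : b ^ p ^ m = 0 := by
      have h1 : b ^ p ^ m ∈ nilradical A ^ p ^ m := Ideal.pow_mem_pow hb _
      have h2 : nilradical A ^ p ^ m ≤ nilradical A ^ k := Ideal.pow_le_pow_right hm
      rw [hk] at h2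
      simpa using h2 h1
    have ha' : a ^ p ^ m ∈ I.frobeniusPower (p ^ (e + m)) := by
      rw [← frob_frob hp I e m]
      exact pow_mem_frob ha _
    have hclean : c ^ p ^ m * z ^ p ^ (e + m) = a ^ p ^ m := by
      have : (c * z ^ p ^ e) ^ p ^ m = c ^ p ^ m * z ^ p ^ (e + m) := by
        rw [mul_pow, ← pow_mul, ← pow_add]
      rw [← this, hfrob, hb0, add_zero]
    rw [hclean]
    exact ha'

end Main

section Loc

variable {R : Type} [CommRing R] (U : Submonoid R)

local notation "L" => Localization U

lemma loc_disjoint {Q : Ideal L} (hQ : Q.IsPrime) :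
    Disjoint (U : Set R) ((Q.comap (algebraMap R L) : Ideal R) : Set R) := by
  rw [Set.disjoint_left]
  intro a haU haQ
  have h1 : IsUnit (algebraMap R L a) := IsLocalization.map_units L ⟨a, haU⟩
  exact hQ.ne_top (Ideal.eq_top_of_isUnit_mem _ haQ h1)

lemma loc_min_comap {Q : Ideal L} (hQ : Q ∈ minimalPrimes L) :
    Q.comap (algebraMap R L) ∈ minimalPrimes R := by
  haveI hQp : Q.IsPrime := hQ.1.1
  have hdisj := loc_disjoint U hQp
  refine ⟨⟨Ideal.IsPrime.comap _, bot_le⟩, ?_⟩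
  rintro P' ⟨hP'p, -⟩ hle
  have hd' : Disjoint (U : Set R) (P' : Set R) :=
    Set.disjoint_of_subset_right hle hdisj
  have hQ'p : (P'.map (algebraMap R L)).IsPrime :=
    IsLocalization.isPrime_of_isPrime_disjoint U L P' hP'p hd'
  have hQ'Q : P'.map (algebraMap R L) ≤ Q :=
    le_trans (Ideal.map_mono hle) (Ideal.map_comap_le)
  have hQQ' : Q ≤ P'.map (algebraMap R L) := hQ.2 ⟨hQ'p, bot_le⟩ hQ'Q
  calc Q.comap (algebraMap R L) ≤ (P'.map (algebraMap R L)).comap (algebraMap R L) :=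
        Ideal.comap_mono hQQ'
    _ = P' := IsLocalization.comap_map_of_isPrime_disjoint U L hP'p hd'

lemma loc_min_map {P : Ideal R} (hP : P ∈ minimalPrimes R)
    (hd : Disjoint (U : Set R) (P : Set R)) :
    P.map (algebraMap R L) ∈ minimalPrimes L := by
  refine ⟨⟨IsLocalization.isPrime_of_isPrime_disjoint U L P hP.1.1 hd, bot_le⟩, ?_⟩
  rintro Q'' ⟨hQ''p, -⟩ hle
  haveI := hQ''p
  have h1 : Q''.comap (algebraMap R L) ≤ P := by
    calc Q''.comap (algebraMap R L) ≤ (P.map (algebraMap R L)).comap (algebraMap R L) :=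
          Ideal.comap_mono hle
      _ = P := IsLocalization.comap_map_of_isPrime_disjoint U L hP.1.1 hd
  have h2 : P ≤ Q''.comap (algebraMap R L) := hP.2 ⟨Ideal.IsPrime.comap _, bot_le⟩ h1
  calc P.map (algebraMap R L) ≤ (Q''.comap (algebraMap R L)).map (algebraMap R L) :=
        Ideal.map_mono h2
    _ ≤ Q'' := Ideal.map_comap_le

variable {S : Type} [CommRing S] (f : R →+* S)

local notation "T'" => Localization (U.map f)

noncomputable def locHom : Localization U →+* Localization (U.map f) :=
  IsLocalization.lift (M := U) (S := Localization U)
    (g := (algebraMap S (Localization (U.map f))).comp f)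
    (fun u => IsLocalization.map_units (M := U.map f) (Localization (U.map f))
      ⟨f u, Submonoid.mem_map_of_mem f u.2⟩)

lemma locHom_algebraMap (r : R) :
    locHom U f (algebraMap R L r) = algebraMap S T' (f r) :=
  IsLocalization.lift_eq _ r

lemma locHom_comp_eq : (locHom U f).comp (algebraMap R L) = (algebraMap S T').comp f :=
  RingHom.ext (locHom_algebraMap U f)

lemma locHom_map_map (I : Ideal R) :
    Ideal.map (locHom U f) (I.map (algebraMap R L)) = (I.map f).map (algebraMap S T') := by
  rw [Ideal.map_map, Ideal.map_map, locHom_comp_eq]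

lemma locHom_mk'_mul (x : R) (u : U) :
    locHom U f (IsLocalization.mk' L x u) * algebraMap S T' (f u) = algebraMap S T' (f x) := by
  rw [← locHom_algebraMap U f, ← locHom_algebraMap U f, ← map_mul, IsLocalization.mk'_spec]

lemma locHom_ker (hpr : (RingHom.ker f).IsPrime)
    (hdisj : Disjoint (U : Set R) ((RingHom.ker f : Ideal R) : Set R)) :
    RingHom.ker (locHom U f) = (RingHom.ker f).map (algebraMap R L) := by
  apply le_antisymm
  · intro z hz
    obtain ⟨x, u, rfl⟩ := IsLocalization.exists_mk'_eq U z
    rw [RingHom.mem_ker] at hz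
    have h1 := locHom_mk'_mul U f x u
    rw [hz, zero_mul] at h1
    obtain ⟨v, hv⟩ := (IsLocalization.map_eq_zero_iff (U.map f) T' (f x)).mp h1.symm
    obtain ⟨u₁, hu₁U, hu₁⟩ := v.2
    have h2 : u₁ * x ∈ RingHom.ker f := by
      rw [RingHom.mem_ker, map_mul, hu₁]
      exact hv
    have h3 : x ∈ RingHom.ker f := by
      rcases hpr.mem_or_mem h2 with h | h
      · exact absurd h (Set.disjoint_left.mp hdisj hu₁U)
      · exact h
    rw [IsLocalization.mk'_eq_mul_mk'_one]
    exact Ideal.mul_mem_right _ _ (Ideal.mem_map_of_mem _ h3)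
  · rw [Ideal.map_le_iff_le_comap]
    intro x hx
    rw [RingHom.mem_ker] at hx
    rw [Ideal.mem_comap, RingHom.mem_ker, locHom_algebraMap U f, hx, map_zero]

lemma locHom_finite (hfin : f.Finite) : (locHom U f).Finite := by
  classical
  letI : Algebra R S := f.toAlgebra
  letI : Algebra (Localization U) T' := (locHom U f).toAlgebra
  haveI hMF : Module.Finite R S := hfin
  obtain ⟨s, hs⟩ := Module.finite_def.mp hMF
  have hsmulL : ∀ (l : Localization U) (t : T'), l • t = locHom U f l * t := fun l t => rfl
  have stepA : ∀ t : S, algebraMap S T' t ∈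
      Submodule.span (Localization U) (⇑(algebraMap S T') '' (s : Set S)) := by
    intro t
    have ht : t ∈ Submodule.span R (s : Set S) := by rw [hs]; trivial
    induction ht using Submodule.span_induction with
    | mem x hx => exact Submodule.subset_span ⟨x, hx, rfl⟩
    | zero => rw [map_zero]; exact Submodule.zero_mem _
    | add a b ha hb iha ihb => rw [map_add]; exact Submodule.add_mem _ iha ihb
    | smul r t0 ht0 ih =>
        have e0 : r • t0 = f r * t0 := by rw [Algebra.smul_def]; rfl
        have e1 : algebraMap S T' (r • t0)
            = (algebraMap R (Localization U) r) • (algebraMap S T' t0) := by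
          rw [e0, map_mul, hsmulL, locHom_algebraMap U f]
        rw [e1]
        exact Submodule.smul_mem _ _ ih
  constructor
  refine ⟨s.image (algebraMap S T'), ?_⟩
  rw [eq_top_iff]
  intro x _
  obtain ⟨t, v, rfl⟩ := IsLocalization.exists_mk'_eq (U.map f) x
  obtain ⟨u₁, hu₁U, hu₁⟩ := v.2
  have hunit : IsUnit (algebraMap S T' v) := IsLocalization.map_units T' v
  have e2 : locHom U f (IsLocalization.mk' (Localization U) 1 ⟨u₁, hu₁U⟩)
      = IsLocalization.mk' T' 1 v := by
    have h1 : locHom U f (IsLocalization.mk' (Localization U) 1 ⟨u₁, hu₁U⟩)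
        * algebraMap S T' (v : S) = 1 := by
      rw [← hu₁]
      have h0 := locHom_mk'_mul U f 1 ⟨u₁, hu₁U⟩
      simp only [map_one] at h0
      exact h0
    have h2 : IsLocalization.mk' T' (1 : S) v * algebraMap S T' (v : S) = 1 := by
      rw [IsLocalization.mk'_spec, map_one]
    calc locHom U f (IsLocalization.mk' (Localization U) 1 ⟨u₁, hu₁U⟩)
        = locHom U f (IsLocalization.mk' (Localization U) 1 ⟨u₁, hu₁U⟩)
          * (algebraMap S T' (v : S) * IsLocalization.mk' T' 1 v) := by
            rw [mul_comm (algebraMap S T' (v : S)) _, h2, mul_one]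
      _ = (locHom U f (IsLocalization.mk' (Localization U) 1 ⟨u₁, hu₁U⟩)
          * algebraMap S T' (v : S)) * IsLocalization.mk' T' 1 v := by ring
      _ = IsLocalization.mk' T' 1 v := by rw [h1, one_mul]
  have e3 : IsLocalization.mk' T' t v
      = (IsLocalization.mk' (Localization U) 1 ⟨u₁, hu₁U⟩) • (algebraMap S T' t) := by
    rw [hsmulL, e2, IsLocalization.mk'_eq_mul_mk'_one, mul_comm]
  rw [e3]
  refine Submodule.smul_mem _ _ ?_
  rw [Finset.coe_image]
  exact stepA t

lemma locHom_extract [IsDomain S] (hpr : (RingHom.ker f).IsPrime)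
    (hdisj : Disjoint (U : Set R) ((RingHom.ker f : Ideal R) : Set R))
    (I : Ideal R) (x : R) (u : U)
    (hz : locHom U f (IsLocalization.mk' L x u) ∈
      Ideal.map (locHom U f) (I.map (algebraMap R L))) :
    ∃ w ∈ U, w * x ∈ (I.map f).comap f := by
  rw [locHom_map_map] at hz
  have h1 : algebraMap S T' (f x) ∈ (I.map f).map (algebraMap S T') := by
    rw [← locHom_mk'_mul U f x u]
    exact Ideal.mul_mem_right _ _ hz
  rw [IsLocalization.mem_map_algebraMap_iff (U.map f) T'] at h1
  obtain ⟨⟨a, v⟩, hav⟩ := h1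
  -- hav : algebraMap S T' (f x) * algebraMap S T' v = algebraMap S T' a
  have h2 : algebraMap S T' (f x * (v : S) - (a : S)) = 0 := by
    rw [map_sub, map_mul, sub_eq_zero]
    exact hav
  obtain ⟨v₂, hv₂⟩ := (IsLocalization.map_eq_zero_iff (U.map f) T' _).mp h2
  obtain ⟨u₁, hu₁U, hu₁⟩ := v.2
  obtain ⟨u₂, hu₂U, hu₂⟩ := v₂.2
  refine ⟨u₂ * u₁, U.mul_mem hu₂U hu₁U, ?_⟩
  rw [Ideal.mem_comap]
  have h3 : (v₂ : S) * (f x * (v : S)) = (v₂ : S) * (a : S) := by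
    refine sub_eq_zero.mp ?_
    rw [← mul_sub]
    exact hv₂

  have h4 : f (u₂ * u₁ * x) = (v₂ : S) * (f x * (v : S)) := by
    rw [map_mul, map_mul, hu₂, hu₁]
    ring
  rw [h4, h3]
  exact Ideal.mul_mem_left _ _ a.2

lemma locV_le_nzd [IsDomain S]
    (hdisj : Disjoint (U : Set R) ((RingHom.ker f : Ideal R) : Set R)) :
    (U.map f) ≤ nonZeroDivisors S := by
  rintro v ⟨u, huU, rfl⟩
  refine mem_nonZeroDivisors_of_ne_zero fun h0 => ?_
  exact Set.disjoint_left.mp hdisj huU (RingHom.mem_ker.mpr h0)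

end Loc

structure RData (p : ℕ) (R : Type) [CommRing R] (P : Ideal R) where
  S : Type
  [cr : CommRing S]
  [dom : IsDomain S]
  f : R →+* S
  ker_eq : RingHom.ker f = P
  fin : f.Finite
  freg : FRegular p S

attribute [instance] RData.cr RData.dom

noncomputable def rDataOfHyp {p : ℕ} {R : Type} [CommRing R] {P : Ideal R} (hP : P.IsPrime)
    (hex : ∃ (S : Type) (_ : CommRing S) (_ : IsDomain S) (f : (R ⧸ P) →+* S),
      Function.Injective f ∧ f.Finite ∧ f.IsIntegral ∧ FRegular p S) : RData p R P :=
  letI S0 := hex.choose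
  letI i1 : CommRing S0 := hex.choose_spec.choose
  letI i2 : IsDomain S0 := hex.choose_spec.choose_spec.choose
  let g : (R ⧸ P) →+* S0 := hex.choose_spec.choose_spec.choose_spec.choose
  have hg := hex.choose_spec.choose_spec.choose_spec.choose_spec
  { S := S0
    cr := i1
    dom := i2
    f := g.comp (Ideal.Quotient.mk P)
    ker_eq := by
      have h1 : RingHom.ker g = ⊥ := (RingHom.injective_iff_ker_eq_bot g).mp hg.1
      have h2 : RingHom.ker (g.comp (Ideal.Quotient.mk P)) =
          Ideal.comap (Ideal.Quotient.mk P) (RingHom.ker g) := rfl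
      rw [h2, h1, ← RingHom.ker_eq_comap_bot, Ideal.mk_ker]
    fin := hg.2.1.comp (RingHom.Finite.of_surjective _ Ideal.Quotient.mk_surjective)
    freg := hg.2.2.2 }

section Assemble

variable {p : ℕ}

noncomputable def buildER {R : Type} [CommRing R]
    (D : ∀ P : Ideal R, P ∈ minimalPrimes R → RData p R P) :
    ∀ P : Ideal R, P ∈ minimalPrimes R → ExtData p R P := fun P hP =>
  { T := (D P hP).S
    f := (D P hP).f
    ker_eq := (D P hP).ker_eq
    fin := (D P hP).fin
    closed := (D P hP).freg.1 }

noncomputable def buildEL {R : Type} [CommRing R] (U : Submonoid R)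
    (D : ∀ P : Ideal R, P ∈ minimalPrimes R → RData p R P) :
    ∀ Q : Ideal (Localization U), Q ∈ minimalPrimes (Localization U) →
      ExtData p (Localization U) Q := fun Q hQ =>
  have hP : Q.comap (algebraMap R (Localization U)) ∈ minimalPrimes R := loc_min_comap U hQ
  have hdisjQ : Disjoint (U : Set R) ((Q.comap (algebraMap R (Localization U)) : Ideal R) : Set R) :=
    loc_disjoint U hQ.1.1
  have hdisjker : Disjoint (U : Set R)
      ((RingHom.ker (D _ hP).f : Ideal R) : Set R) := by
    rw [(D _ hP).ker_eq]; exact hdisjQ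
  haveI : IsDomain (Localization (U.map (D _ hP).f)) :=
    IsLocalization.isDomain_localization (locV_le_nzd U (D _ hP).f hdisjker)
  { T := Localization (U.map (D _ hP).f)
    f := locHom U (D _ hP).f
    ker_eq := by
      rw [locHom_ker U (D _ hP).f (by rw [(D _ hP).ker_eq]; exact hP.1.1) hdisjker,
        (D _ hP).ker_eq]
      exact IsLocalization.map_comap U (Localization U) Q
    fin := locHom_finite U (D _ hP).f (D _ hP).fin
    closed := (D _ hP).freg.2 (U.map (D _ hP).f) }

lemma transport_mem {R : Type} [CommRing R] (U : Submonoid R)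
    (D : ∀ P : Ideal R, P ∈ minimalPrimes R → RData p R P) (J : Ideal (Localization U))
    {P₁ P₂ : Ideal R} (h₁ : P₁ ∈ minimalPrimes R) (h₂ : P₂ ∈ minimalPrimes R)
    (heq : P₁ = P₂) {z : Localization U}
    (hz : z ∈ Ideal.comap (locHom U (D P₁ h₁).f) (Ideal.map (locHom U (D P₁ h₁).f) J)) :
    z ∈ Ideal.comap (locHom U (D P₂ h₂).f) (Ideal.map (locHom U (D P₂ h₂).f) J) := by
  subst heq
  exact hz

lemma key_eq (hp : p.Prime) (R : Type) [CommRing R] [IsNoetherianRing R]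
    (U : Submonoid R)
    (D : ∀ P : Ideal R, P ∈ minimalPrimes R → RData p R P) (I : Ideal R) :
    Ideal.map (algebraMap R (Localization U))
      (⨅ P : {P : Ideal R // P ∈ minimalPrimes R},
        Ideal.comap ((buildER D) P.1 P.2).f (Ideal.map ((buildER D) P.1 P.2).f I))
    = ⨅ Q : {Q : Ideal (Localization U) // Q ∈ minimalPrimes (Localization U)},
        Ideal.comap ((buildEL U D) Q.1 Q.2).f
          (Ideal.map ((buildEL U D) Q.1 Q.2).f
            (Ideal.map (algebraMap R (Localization U)) I)) := by
  classical
  apply le_antisymm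
  · rw [Ideal.map_le_iff_le_comap]
    intro y hy
    rw [Ideal.mem_comap, Submodule.mem_iInf]
    rintro ⟨Q, hQ⟩
    have hP : Q.comap (algebraMap R (Localization U)) ∈ minimalPrimes R := loc_min_comap U hQ
    have h1 := (Submodule.mem_iInf _).mp hy ⟨Q.comap (algebraMap R (Localization U)), hP⟩
    rw [Ideal.mem_comap] at h1
    show algebraMap R (Localization U) y ∈
      Ideal.comap (locHom U (D _ hP).f)
        (Ideal.map (locHom U (D _ hP).f) (Ideal.map (algebraMap R (Localization U)) I))
    rw [Ideal.mem_comap, locHom_algebraMap U (D _ hP).f, locHom_map_map]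
    exact Ideal.mem_map_of_mem _ h1
  · intro z hz
    obtain ⟨x, u, rfl⟩ := IsLocalization.exists_mk'_eq U z
    have hUP : ∀ P (hP : P ∈ minimalPrimes R), ∃ w ∈ U,
        w * x ∈ Ideal.comap (D P hP).f (Ideal.map (D P hP).f I) := by
      intro P hP
      by_cases hdis : Disjoint (U : Set R) (P : Set R)
      · have hQmin : Ideal.map (algebraMap R (Localization U)) P ∈
            minimalPrimes (Localization U) := loc_min_map U hP hdis
        have hz2 := (Submodule.mem_iInf _).mp hz
          ⟨Ideal.map (algebraMap R (Localization U)) P, hQmin⟩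
        have hPQ : (Ideal.map (algebraMap R (Localization U)) P).comap
            (algebraMap R (Localization U)) = P :=
          IsLocalization.comap_map_of_isPrime_disjoint U _ hP.1.1 hdis
        have hz3 : IsLocalization.mk' (Localization U) x u ∈
            Ideal.comap (locHom U (D P hP).f)
              (Ideal.map (locHom U (D P hP).f)
                (Ideal.map (algebraMap R (Localization U)) I)) :=
          transport_mem U D _ (loc_min_comap U hQmin) hP hPQ hz2
        rw [Ideal.mem_comap] at hz3
        exact locHom_extract U (D P hP).f (by rw [(D P hP).ker_eq]; exact hP.1.1)
          (by rw [(D P hP).ker_eq]; exact hdis) I x u hz3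
      · obtain ⟨w, hwU, hwP⟩ := Set.not_disjoint_iff.mp hdis
        refine ⟨w, hwU, ?_⟩
        rw [Ideal.mem_comap]
        have hker : w * x ∈ RingHom.ker (D P hP).f := by
          rw [(D P hP).ker_eq]
          exact Ideal.mul_mem_right x P hwP
        rw [RingHom.mem_ker] at hker
        rw [hker]
        exact Ideal.zero_mem _
    choose w hwU hwC using hUP
    have hsfin : (minimalPrimes R).Finite := minimalPrimes.finite_of_isNoetherianRing R
    set sF : Finset (Ideal R) := hsfin.toFinset with hsF
    have hmemsF : ∀ P : Ideal R, P ∈ sF ↔ P ∈ minimalPrimes R := fun P => hsfin.mem_toFinset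
    set W : R := ∏ P ∈ sF.attach, w P.1 ((hmemsF P.1).mp P.2) with hWdef
    have hWU : W ∈ U := Submonoid.prod_mem U (fun P _ => hwU _ _)
    have hWC : (W * x) ∈ (⨅ P : {P : Ideal R // P ∈ minimalPrimes R},
        Ideal.comap ((buildER D) P.1 P.2).f (Ideal.map ((buildER D) P.1 P.2).f I)) := by
      rw [Submodule.mem_iInf]
      rintro ⟨P, hP⟩
      have hPs : P ∈ sF := (hmemsF P).mpr hP
      have hPa : (⟨P, hPs⟩ : {y // y ∈ sF}) ∈ sF.attach := Finset.mem_attach _ _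
      have hsplit : W = w P ((hmemsF P).mp hPs) *
          ∏ Q ∈ sF.attach.erase ⟨P, hPs⟩, w Q.1 ((hmemsF Q.1).mp Q.2) := by
        rw [hWdef, ← Finset.mul_prod_erase _ _ hPa]
      have : W * x = (∏ Q ∈ sF.attach.erase ⟨P, hPs⟩, w Q.1 ((hmemsF Q.1).mp Q.2)) *
          (w P ((hmemsF P).mp hPs) * x) := by
        rw [hsplit]; ring
      rw [this]
      exact Ideal.mul_mem_left _ _ (hwC P hP)
    rw [IsLocalization.mem_map_algebraMap_iff U (Localization U)]
    refine ⟨⟨⟨W * x, hWC⟩, u * ⟨W, hWU⟩⟩, ?_⟩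
    show IsLocalization.mk' (Localization U) x u *
        algebraMap R (Localization U) ((u : R) * W) = algebraMap R (Localization U) (W * x)
    rw [map_mul, ← mul_assoc, IsLocalization.mk'_spec, ← map_mul, mul_comm W x]

end Assemble


/-- **Corollary.** If modulo each minimal prime `P`, the domain `R/P` has a
module-finite integral extension domain that is F-regular, then tight closure
commutes with localization in `R`. -/
theorem tightClosure_commutes_localization_of_fRegular_extension
    (p : ℕ) [Fact p.Prime] (R : Type) [CommRing R] [IsNoetherianRing R] [CharP R p]
    (h : ∀ P ∈ minimalPrimes R,
      ∃ (S : Type) (_ : CommRing S) (_ : IsDomain S) (f : (R ⧸ P) →+* S),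
        Function.Injective f ∧ f.Finite ∧ f.IsIntegral ∧ FRegular p S) :
    TightClosureCommutesWithLocalization p R := by
  classical
  intro I U
  have hp : p.Prime := Fact.out
  rcases subsingleton_or_nontrivial (Localization U) with hL | hL
  · have h2 : ∀ z : Localization U,
        z ∈ tightClosure p (Ideal.map (algebraMap R (Localization U)) I) := by
      intro z
      refine ⟨1, ?_, 0, fun e _ => ?_⟩
      · intro P hP
        have hPT : P = ⊤ := by
          ext y
          simp only [Submodule.mem_top, iff_true]
          rw [Subsingleton.elim y 0]
          exact P.zero_mem
        exact absurd hPT hP.1.1.ne_top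
      · rw [Subsingleton.elim (1 * z ^ p ^ e) 0]
        exact Ideal.zero_mem _
    ext z
    simp only [SetLike.mem_coe]
    constructor
    · intro _
      exact h2 z
    · intro _
      rw [Subsingleton.elim z 0]
      exact Ideal.zero_mem _
  · haveI : CharP (Localization U) p := by
      refine charP_of_prime_cast_zero hp ?_
      have h0 : (p : Localization U) = algebraMap R (Localization U) ((p : ℕ) : R) :=
        (map_natCast _ p).symm
      rw [h0, CharP.cast_eq_zero R p, map_zero]
    haveI : IsNoetherianRing (Localization U) :=
      IsLocalization.isNoetherianRing U (Localization U) inferInstance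
    set D : ∀ P : Ideal R, P ∈ minimalPrimes R → RData p R P :=
      fun P hP => rDataOfHyp hP.1.1 (h P hP) with hD
    have hmainR := main_eq hp R (buildER D) I
    have hmainL := main_eq hp (Localization U) (buildEL U D)
      (I.map (algebraMap R (Localization U)))
    rw [hmainR, Ideal.span_eq, hmainL]
    exact congrArg _ (key_eq hp R U D I)
end
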